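/- For every natural number n, ∑_{k=0}^{n} (-1)^{k} (1/(k+2)) · C(n, k) = 1/((n+1)(n+2)), as rational numbers. -/

import Mathlib

open Finset

lemma alt_sum (m : ℕ) (hm : 1 ≤ m) :
    ∑ j ∈ Finset.range (m + 1), (-1 : ℚ) ^ j * (m.choose j) = 0 := by
  have h := Int.alternating_sum_range_choose (n := m)
  rw [if_neg (by omega)] at h
  have h2 : ((∑ i ∈ Finset.range (m + 1), (-1 : ℤ) ^ i * (m.choose i) : ℤ) : ℚ) = 0 := by
    rw [h]; norm_num
  push_cast at h2
  convert h2 using 2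

lemma alt_sum_j (m : ℕ) (hm : 2 ≤ m) :
    ∑ j ∈ Finset.range (m + 1), (-1 : ℚ) ^ j * j * (m.choose j) = 0 := by
  have key : ∀ i : ℕ, ((i : ℚ) + 1) * (m.choose (i + 1)) = m * ((m - 1).choose i) := by
    intro i
    have h : m * ((m - 1).choose i) = (m.choose (i + 1)) * (i + 1) := by
      have h' := Nat.add_one_mul_choose_eq (m - 1) i
      rw [Nat.sub_add_cancel (by omega)] at h'
      exact h'
    have hc := congrArg (Nat.cast : ℕ → ℚ) h
    push_cast at hc
    linarith
  rw [Finset.sum_range_succ']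
  have hmain : ∑ i ∈ Finset.range m, (-1 : ℚ) ^ (i + 1) * ((i : ℚ) + 1) * (m.choose (i + 1))
      = -m * ∑ i ∈ Finset.range m, (-1 : ℚ) ^ i * ((m - 1).choose i) := by
    rw [Finset.mul_sum]
    refine Finset.sum_congr rfl fun i _ => ?_
    rw [pow_succ]
    linear_combination (-(-1 : ℚ) ^ i) * key i
  have hrw : ∑ i ∈ Finset.range m, (-1 : ℚ) ^ (i + 1) * ((i : ℕ) + 1 : ℕ) * (m.choose (i + 1))
      = ∑ i ∈ Finset.range m, (-1 : ℚ) ^ (i + 1) * ((i : ℚ) + 1) * (m.choose (i + 1)) := by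
    refine Finset.sum_congr rfl fun i _ => ?_
    push_cast; ring
  have halt : ∑ i ∈ Finset.range m, (-1 : ℚ) ^ i * ((m - 1).choose i) = 0 := by
    have h := alt_sum (m - 1) (by omega)
    rw [Nat.sub_add_cancel (by omega)] at h
    exact h
  push_cast
  rw [hmain, halt]
  ring

lemma L2 (n : ℕ) :
    ∑ k ∈ Finset.range (n + 1), (-1 : ℚ) ^ k * ((k : ℚ) + 1) * ((n + 2).choose (k + 2)) = 1 := by
  have h1 := alt_sum_j (n + 2) (by omega)
  have h2 := alt_sum (n + 2) (by omega)
  have h0 : ∑ j ∈ Finset.range (n + 2 + 1), (-1 : ℚ) ^ j * ((j : ℚ) - 1) * ((n + 2).choose j) = 0 := by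
    have hsplit : ∑ j ∈ Finset.range (n + 2 + 1), (-1 : ℚ) ^ j * ((j : ℚ) - 1) * ((n + 2).choose j)
        = (∑ j ∈ Finset.range (n + 2 + 1), (-1 : ℚ) ^ j * (j : ℚ) * ((n + 2).choose j))
          - ∑ j ∈ Finset.range (n + 2 + 1), (-1 : ℚ) ^ j * ((n + 2).choose j) := by
      rw [← Finset.sum_sub_distrib]
      exact Finset.sum_congr rfl fun j _ => by ring
    rw [hsplit, h1, h2]; ring
  have hstrip : ∑ j ∈ Finset.range (n + 2 + 1), (-1 : ℚ) ^ j * ((j : ℚ) - 1) * ((n + 2).choose j)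
      = (∑ k ∈ Finset.range (n + 1), (-1 : ℚ) ^ k * ((k : ℚ) + 1) * ((n + 2).choose (k + 2))) - 1 := by
    rw [Finset.sum_range_succ', Finset.sum_range_succ']
    have hterm : ∀ k ∈ Finset.range (n + 1), (-1 : ℚ) ^ (k + 1 + 1) * (((k + 1 + 1 : ℕ) : ℚ) - 1) * ((n + 2).choose (k + 1 + 1))
        = (-1 : ℚ) ^ k * ((k : ℚ) + 1) * ((n + 2).choose (k + 2)) := by
      intro k _
      have he : k + 1 + 1 = k + 2 := rfl
      rw [he]
      push_cast
      ring
    rw [Finset.sum_congr rfl hterm]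
    simp only [Nat.choose_zero_right, Nat.cast_one, mul_one, zero_mul, add_zero,
      pow_zero, pow_one, one_mul, neg_mul, Nat.cast_zero]
    ring
  rw [hstrip] at h0
  linarith

theorem euler_case5 (n : ℕ) :
    ∑ k ∈ Finset.range (n + 1), (-1 : ℚ) ^ k * (1 / (k + 2)) * (n.choose k) =
      1 / ((n + 1) * (n + 2)) := by
  have key : ∀ k : ℕ, ((n : ℚ) + 1) * ((n : ℚ) + 2) * (n.choose k)
      = ((k : ℚ) + 1) * ((k : ℚ) + 2) * ((n + 2).choose (k + 2)) := by
    intro k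
    have h1 : (n + 1) * n.choose k = (n + 1).choose (k + 1) * (k + 1) :=
      Nat.add_one_mul_choose_eq n k
    have h2 : (n + 2) * (n + 1).choose (k + 1) = (n + 2).choose (k + 2) * (k + 2) :=
      Nat.add_one_mul_choose_eq (n + 1) (k + 1)
    have e1 := congrArg (Nat.cast : ℕ → ℚ) h1
    have e2 := congrArg (Nat.cast : ℕ → ℚ) h2
    push_cast at e1 e2
    nlinarith [e1, e2]
  have termeq : ∀ k : ℕ, (-1 : ℚ) ^ k * (1 / (k + 2)) * (n.choose k)
      = (1 / (((n : ℚ) + 1) * ((n : ℚ) + 2))) * ((-1 : ℚ) ^ k * ((k : ℚ) + 1) * ((n + 2).choose (k + 2))) := by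
    intro k
    have hk2 : ((k : ℚ) + 2) ≠ 0 := by positivity
    have hn1 : ((n : ℚ) + 1) ≠ 0 := by positivity
    have hn2 : ((n : ℚ) + 2) ≠ 0 := by positivity
    field_simp
    linear_combination key k
  calc ∑ k ∈ Finset.range (n + 1), (-1 : ℚ) ^ k * (1 / (k + 2)) * (n.choose k)
      = ∑ k ∈ Finset.range (n + 1), (1 / (((n : ℚ) + 1) * ((n : ℚ) + 2))) * ((-1 : ℚ) ^ k * ((k : ℚ) + 1) * ((n + 2).choose (k + 2))) :=
        Finset.sum_congr rfl fun k _ => termeq k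
    _ = (1 / (((n : ℚ) + 1) * ((n : ℚ) + 2))) * ∑ k ∈ Finset.range (n + 1), (-1 : ℚ) ^ k * ((k : ℚ) + 1) * ((n + 2).choose (k + 2)) := by
        rw [Finset.mul_sum]
    _ = 1 / ((n + 1) * (n + 2)) := by rw [L2]; ring
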